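/- Disjoint decomposition of forest families: for a forest of subtrees ℱ of depth ≤ 1 (pairwise disjoint trees), one has ⊔_{𝒢 ∈ 𝔽_<[ℱ]} ⊔_{𝒢' ∈ 𝔽[𝒢]} (𝒢' ⊔ ℱ) = 𝔽[ℱ], i.e. every forest whose set of maximal trees equals ℱ is uniquely obtained as ℱ together with a forest 𝒢' all of whose trees are strictly contained in trees of ℱ, where 𝒢 = Max(𝒢'). -/

import Mathlib

open scoped Classical

variable {V : Type*}

/-- The maximal elements (w.r.t. strict inclusion) of a finite family of trees. -/
noncomputable def maxElems (F : Finset (Finset V)) : Finset (Finset V) :=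
  F.filter fun S => ∀ T ∈ F, ¬ S ⊂ T

/-- A forest of divergent subtrees: a finite collection of trees drawn from `Div`
whose members are pairwise nested or disjoint. -/
def IsForestIn (Div : Set (Finset V)) (F : Finset (Finset V)) : Prop :=
  (↑F ⊆ Div) ∧ ∀ S ∈ F, ∀ T ∈ F, S ⊆ T ∨ T ⊆ S ∨ S ∩ T = ∅

/-- Every member of a finite family is contained in a maximal member. -/
lemma exists_le_maxElems (H : Finset (Finset V)) {S : Finset V} (hS : S ∈ H) :
    ∃ M ∈ maxElems H, S ⊆ M := by
  obtain ⟨M, hM, hmax0⟩ := Finset.exists_maximal (s := H.filter fun T => S ⊆ T)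
    ⟨S, Finset.mem_filter.2 ⟨hS, le_refl S⟩⟩
  have hM : M ∈ H.filter fun T => S ⊆ T := hM
  have hmax : ∀ T ∈ H.filter (fun T => S ⊆ T), ¬ M < T :=
    fun T hT hMT => hMT.2 (hmax0 hT hMT.le)
  rw [Finset.mem_filter] at hM
  refine ⟨M, ?_, hM.2⟩
  simp only [maxElems, Finset.mem_filter]
  exact ⟨hM.1, fun T hT hMT =>
    hmax T (Finset.mem_filter.2 ⟨hT, hM.2.trans hMT.subset⟩) hMT⟩

lemma isForestIn_subset {Div : Set (Finset V)} {H G : Finset (Finset V)}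
    (hH : IsForestIn Div H) (hGH : G ⊆ H) : IsForestIn Div G :=
  ⟨fun x hx => hH.1 (hGH (by exact_mod_cast hx)),
    fun S hS T hT => hH.2 S (hGH hS) T (hGH hT)⟩

/-- disjoint decomposition of forest families. Let `ℱ` be a forest
of depth `≤ 1` (pairwise disjoint trees). Then every forest `𝒢'` whose trees are
strictly contained in trees of `ℱ` gives rise to a forest `ℱ ⊔ 𝒢'` whose set of
maximal trees is `ℱ`; and conversely every forest `H` with `Max(H) = ℱ` is uniquely
obtained as `ℱ ⊔ 𝒢'` from such a `𝒢'`, with `𝒢 = Max(𝒢')` of depth `≤ 1` lying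
strictly below `ℱ`.  In other words,
`⊔_{𝒢 ∈ 𝔽_<[ℱ]} ⊔_{𝒢' ∈ 𝔽[𝒢]} (𝒢' ⊔ ℱ) = 𝔽[ℱ]`. -/
theorem forest_decomposition (Div : Set (Finset V)) (hDiv : ∅ ∉ Div)
    (F : Finset (Finset V)) (hF : IsForestIn Div F)
    (hFdisj : ∀ S ∈ F, ∀ T ∈ F, S ≠ T → S ∩ T = ∅) :
    (∀ G G' : Finset (Finset V),
        (IsForestIn Div G ∧ (∀ S ∈ G, ∀ T ∈ G, S ≠ T → S ∩ T = ∅) ∧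
          ∀ S ∈ G, ∃ T ∈ F, S ⊂ T) →
        (IsForestIn Div G' ∧ maxElems G' = G) →
        Disjoint F G' ∧ IsForestIn Div (F ∪ G') ∧ maxElems (F ∪ G') = F) ∧
      ∀ H : Finset (Finset V), IsForestIn Div H → maxElems H = F →
        ∃! p : Finset (Finset V) × Finset (Finset V),
          (IsForestIn Div p.1 ∧ (∀ S ∈ p.1, ∀ T ∈ p.1, S ≠ T → S ∩ T = ∅) ∧
            ∀ S ∈ p.1, ∃ T ∈ F, S ⊂ T) ∧
          (IsForestIn Div p.2 ∧ maxElems p.2 = p.1) ∧ H = F ∪ p.2 := by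
  have hFne : ∀ S ∈ F, S ≠ ∅ := fun S hS h => hDiv (h ▸ hF.1 hS)
  have part1 : ∀ G G' : Finset (Finset V),
      (IsForestIn Div G ∧ (∀ S ∈ G, ∀ T ∈ G, S ≠ T → S ∩ T = ∅) ∧
        ∀ S ∈ G, ∃ T ∈ F, S ⊂ T) →
      (IsForestIn Div G' ∧ maxElems G' = G) →
      Disjoint F G' ∧ IsForestIn Div (F ∪ G') ∧ maxElems (F ∪ G') = F := by
    intro G G' ⟨hGforest, hGdisj, hGlt⟩ ⟨hG'forest, hmaxG'⟩
    -- every tree of G' sits strictly inside a tree of F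
    have key : ∀ S ∈ G', ∃ T ∈ F, S ⊂ T := by
      intro S hS
      obtain ⟨M, hM, hSM⟩ := exists_le_maxElems G' hS
      rw [hmaxG'] at hM
      obtain ⟨T, hT, hMT⟩ := hGlt M hM
      exact ⟨T, hT, lt_of_le_of_lt hSM hMT⟩
    have hdisj : Disjoint F G' := by
      rw [Finset.disjoint_left]
      intro S hSF hSG'
      obtain ⟨T, hT, hST⟩ := key S hSG'
      have h0 := hFdisj S hSF T hT hST.ne
      rw [Finset.inter_eq_left.2 hST.subset] at h0
      exact hFne S hSF h0
    refine ⟨hdisj, ⟨?_, ?_⟩, ?_⟩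
    · intro x hx
      rcases Finset.mem_union.1 (by exact_mod_cast hx) with h | h
      · exact hF.1 h
      · exact hG'forest.1 h
    · -- nested or disjoint on the union
      have cross : ∀ S ∈ F, ∀ T ∈ G', S ⊆ T ∨ T ⊆ S ∨ S ∩ T = ∅ := by
        intro S hS T hT
        obtain ⟨T', hT', hTT'⟩ := key T hT
        by_cases h : S = T'
        · exact Or.inr (Or.inl (h ▸ hTT'.subset))
        · refine Or.inr (Or.inr ?_)
          have := hFdisj S hS T' hT' h
          exact Finset.subset_empty.1 (this ▸
            Finset.inter_subset_inter le_rfl hTT'.subset)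
      intro S hS T hT
      rcases Finset.mem_union.1 hS with hS | hS <;>
        rcases Finset.mem_union.1 hT with hT | hT
      · exact hF.2 S hS T hT
      · exact cross S hS T hT
      · rcases cross T hT S hS with h | h | h
        · exact Or.inr (Or.inl h)
        · exact Or.inl h
        · exact Or.inr (Or.inr (by rwa [Finset.inter_comm]))
      · exact hG'forest.2 S hS T hT
    · -- maximal elements of the union are exactly F
      ext S
      simp only [maxElems, Finset.mem_filter, Finset.mem_union]
      constructor
      · rintro ⟨hS | hS, hmax⟩
        · exact hS
        · obtain ⟨T, hT, hST⟩ := key S hS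
          exact absurd hST (hmax T (Or.inl hT))
      · intro hS
        refine ⟨Or.inl hS, ?_⟩
        rintro T (hT | hT) hST
        · have h0 := hFdisj S hS T hT hST.ne
          rw [Finset.inter_eq_left.2 hST.subset] at h0
          exact hFne S hS h0
        · obtain ⟨T', hT', hTT'⟩ := key T hT
          have hST' : S ⊂ T' := hST.trans hTT'
          have h0 := hFdisj S hS T' hT' hST'.ne
          rw [Finset.inter_eq_left.2 hST'.subset] at h0
          exact hFne S hS h0
  refine ⟨part1, ?_⟩
  intro H hH hmaxH
  have hFH : F ⊆ H := hmaxH ▸ Finset.filter_subset _ _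
  set G' : Finset (Finset V) := H \ F with hG'
  set G : Finset (Finset V) := maxElems G' with hG
  have hG'H : G' ⊆ H := Finset.sdiff_subset
  have hG'forest : IsForestIn Div G' := isForestIn_subset hH hG'H
  have key2 : ∀ S ∈ G', ∃ T ∈ F, S ⊂ T := by
    intro S hS
    rw [hG', Finset.mem_sdiff] at hS
    obtain ⟨M, hM, hSM⟩ := exists_le_maxElems H hS.1
    rw [hmaxH] at hM
    refine ⟨M, hM, lt_of_le_of_ne hSM ?_⟩
    rintro rfl; exact hS.2 hM
  have hGG' : G ⊆ G' := Finset.filter_subset _ _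
  have hGforest : IsForestIn Div G := isForestIn_subset hG'forest hGG'
  have hGdisj : ∀ S ∈ G, ∀ T ∈ G, S ≠ T → S ∩ T = ∅ := by
    intro S hS T hT hne
    rcases hG'forest.2 S (hGG' hS) T (hGG' hT) with h | h | h
    · rw [hG, maxElems, Finset.mem_filter] at hS
      exact absurd (lt_of_le_of_ne h hne) (hS.2 T (hGG' hT))
    · rw [hG, maxElems, Finset.mem_filter] at hT
      exact absurd (lt_of_le_of_ne h hne.symm) (hT.2 S (hGG' hS))
    · exact h
  have hGlt : ∀ S ∈ G, ∃ T ∈ F, S ⊂ T := fun S hS => key2 S (hGG' hS)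
  have hHeq : H = F ∪ G' := (Finset.union_sdiff_of_subset hFH).symm
  refine ⟨(G, G'), ⟨⟨hGforest, hGdisj, hGlt⟩, ⟨hG'forest, hG.symm⟩, hHeq⟩, ?_⟩
  rintro ⟨q1, q2⟩ ⟨hq1, ⟨hq2forest, hq2max⟩, hqH⟩
  obtain ⟨hdq, -, -⟩ := part1 q1 q2 hq1 ⟨hq2forest, hq2max⟩
  have hq2 : q2 = G' := by
    rw [hG', hqH, Finset.union_sdiff_cancel_left hdq]
  have hq1' : q1 = G := by
    have h : maxElems q2 = q1 := hq2max
    rw [← h, hq2, hG]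
  simp [hq1', hq2]
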